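/- Let H be a real Hilbert space and f₁, f₂ : H → ℝ finite closed convex functions with affine support sets S_{f₁}, S_{f₂}, and let f = f₁ − f₂. Define for each x ∈ H the sets d̲f(x) = { (a − f₁(x) + ⟨v, x⟩, v) : (a, v) ∈ S_{f₁} } and d̄f(x) = { (−b + f₂(x) − ⟨w, x⟩, −w) : (b, w) ∈ S_{f₂} }. Then for all x, Δx ∈ H: f(x + Δx) − f(x) = sup_{(a,v) ∈ d̲f(x)} (a + ⟨v, Δx⟩) + inf_{(b,w) ∈ d̄f(x)} (b + ⟨w, Δx⟩), and moreover sup_{(a,v) ∈ d̲f(x)} a = 0 and inf_{(b,w) ∈ d̄f(x)} b = 0, and the sets d̲f(x), d̄f(x) are closed and convex. -/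

import Mathlib

lemma ereal_biSup_add {ι : Type*} (s : Set ι) (g : ι → EReal) (c : ℝ) :
    (⨆ p ∈ s, (g p + (c : EReal))) = (⨆ p ∈ s, g p) + (c : EReal) := by
  refine le_antisymm
    (iSup₂_le fun p hp => add_le_add_left (le_iSup₂ (f := fun p _ => g p) p hp) _) ?_
  have h : (⨆ p ∈ s, g p) ≤ (⨆ p ∈ s, (g p + (c : EReal))) - (c : EReal) := by
    refine iSup₂_le fun p hp => ?_
    have h2 : g p + (c : EReal) ≤ ⨆ p ∈ s, (g p + (c : EReal)) :=
      le_iSup₂ (f := fun p _ => g p + (c : EReal)) p hp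
    calc g p = g p + (c : EReal) - (c : EReal) := (EReal.add_sub_cancel_right).symm
      _ ≤ _ := EReal.sub_le_sub h2 le_rfl
  calc (⨆ p ∈ s, g p) + (c : EReal)
      ≤ ((⨆ p ∈ s, (g p + (c : EReal))) - (c : EReal)) + (c : EReal) := add_le_add_left h _
    _ = _ := EReal.sub_add_cancel

lemma ereal_biInf_add {ι : Type*} (s : Set ι) (g : ι → EReal) (c : ℝ) :
    (⨅ p ∈ s, (g p + (c : EReal))) = (⨅ p ∈ s, g p) + (c : EReal) := by
  refine le_antisymm ?_
    (le_iInf₂ fun p hp => add_le_add_left (iInf₂_le (f := fun p _ => g p) p hp) _)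
  have h : (⨅ p ∈ s, (g p + (c : EReal))) - (c : EReal) ≤ (⨅ p ∈ s, g p) := by
    refine le_iInf₂ fun p hp => ?_
    have h2 : (⨅ p ∈ s, (g p + (c : EReal))) ≤ g p + (c : EReal) :=
      iInf₂_le (f := fun p _ => g p + (c : EReal)) p hp
    calc (⨅ p ∈ s, (g p + (c : EReal))) - (c : EReal) ≤ g p + (c : EReal) - (c : EReal) :=
          EReal.sub_le_sub h2 le_rfl
      _ = g p := EReal.add_sub_cancel_right
  calc (⨅ p ∈ s, (g p + (c : EReal)))
      = ((⨅ p ∈ s, (g p + (c : EReal))) - (c : EReal)) + (c : EReal) :=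
        EReal.sub_add_cancel.symm
    _ ≤ (⨅ p ∈ s, g p) + (c : EReal) := add_le_add_left h _

lemma ereal_biInf_neg {ι : Type*} (s : Set ι) (g : ι → EReal) :
    (⨅ p ∈ s, (-(g p))) = -(⨆ p ∈ s, g p) := by
  refine le_antisymm ?_
    (le_iInf₂ fun p hp => EReal.neg_le_neg_iff.2 (le_iSup₂ (f := fun p _ => g p) p hp))
  rw [← neg_neg (⨅ p ∈ s, -(g p))]
  refine EReal.neg_le_neg_iff.2 (iSup₂_le fun p hp => ?_)
  exact EReal.le_neg_of_le_neg (iInf₂_le (f := fun p _ => -(g p)) p hp)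

/-- properties of the global codifferential of a DC function f = f₁ − f₂. -/
theorem global_codifferential_properties
    {H : Type*} [NormedAddCommGroup H] [InnerProductSpace ℝ H] [CompleteSpace H]
    (f₁ f₂ : H → ℝ) (S₁ S₂ : Set (ℝ × H))
    (hconv₁ : ConvexOn ℝ Set.univ f₁) (hconv₂ : ConvexOn ℝ Set.univ f₂)
    (hlsc₁ : LowerSemicontinuous f₁) (hlsc₂ : LowerSemicontinuous f₂)
    (hSclosed₁ : IsClosed S₁) (hSconv₁ : Convex ℝ S₁)
    (hSclosed₂ : IsClosed S₂) (hSconv₂ : Convex ℝ S₂)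
    (hrep₁ : ∀ x, ((f₁ x : ℝ) : EReal) = ⨆ p ∈ S₁, ((p.1 + inner ℝ p.2 x : ℝ) : EReal))
    (hrep₂ : ∀ x, ((f₂ x : ℝ) : EReal) = ⨆ p ∈ S₂, ((p.1 + inner ℝ p.2 x : ℝ) : EReal))
    (dl du : H → Set (ℝ × H))
    (hdl : ∀ x, dl x = {q : ℝ × H | ∃ p ∈ S₁, q = (p.1 - f₁ x + inner ℝ p.2 x, p.2)})
    (hdu : ∀ x, du x = {q : ℝ × H | ∃ p ∈ S₂, q = (-p.1 + f₂ x - inner ℝ p.2 x, -p.2)}) :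
    (∀ x Δx : H,
        (((f₁ (x + Δx) - f₂ (x + Δx) - (f₁ x - f₂ x) : ℝ)) : EReal)
          = (⨆ q ∈ dl x, ((q.1 + inner ℝ q.2 Δx : ℝ) : EReal))
            + ⨅ q ∈ du x, ((q.1 + inner ℝ q.2 Δx : ℝ) : EReal))
      ∧ (∀ x, (⨆ q ∈ dl x, ((q.1 : ℝ) : EReal)) = 0)
      ∧ (∀ x, (⨅ q ∈ du x, ((q.1 : ℝ) : EReal)) = 0)
      ∧ (∀ x, IsClosed (dl x) ∧ Convex ℝ (dl x))
      ∧ (∀ x, IsClosed (du x) ∧ Convex ℝ (du x)) := by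
  have hdl' : ∀ x, dl x = (fun p : ℝ × H => (p.1 - f₁ x + inner ℝ p.2 x, p.2)) '' S₁ := by
    intro x; rw [hdl x]; ext q
    simp only [Set.mem_setOf_eq, Set.mem_image]
    exact ⟨fun ⟨p, hp, h⟩ => ⟨p, hp, h.symm⟩, fun ⟨p, hp, h⟩ => ⟨p, hp, h.symm⟩⟩
  have hdu' : ∀ x, du x = (fun p : ℝ × H => (-p.1 + f₂ x - inner ℝ p.2 x, -p.2)) '' S₂ := by
    intro x; rw [hdu x]; ext q
    simp only [Set.mem_setOf_eq, Set.mem_image]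
    exact ⟨fun ⟨p, hp, h⟩ => ⟨p, hp, h.symm⟩, fun ⟨p, hp, h⟩ => ⟨p, hp, h.symm⟩⟩
  -- sup formula
  have hsup : ∀ x y : H, (⨆ q ∈ dl x, ((q.1 + inner ℝ q.2 y : ℝ) : EReal))
      = ((f₁ (x + y) - f₁ x : ℝ) : EReal) := by
    intro x y
    rw [hdl' x, iSup_image]
    have step : ∀ p : ℝ × H,
        (((p.1 - f₁ x + inner ℝ p.2 x, p.2).1 + inner ℝ (p.1 - f₁ x + inner ℝ p.2 x, p.2).2 y : ℝ) : EReal)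
          = ((p.1 + inner ℝ p.2 (x + y) : ℝ) : EReal) + ((-(f₁ x) : ℝ) : EReal) := by
      intro p
      rw [← EReal.coe_add]
      norm_cast
      rw [inner_add_right]
      ring
    have congr1 := iSup_congr fun p : ℝ × H => iSup_congr fun _ : p ∈ S₁ => step p
    rw [congr1,
      ereal_biSup_add S₁ (fun p => ((p.1 + inner ℝ p.2 (x + y) : ℝ) : EReal)) (-(f₁ x)),
      ← hrep₁ (x + y), ← EReal.coe_add]
    norm_cast
  -- inf formula
  have hinf : ∀ x y : H, (⨅ q ∈ du x, ((q.1 + inner ℝ q.2 y : ℝ) : EReal))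
      = ((f₂ x - f₂ (x + y) : ℝ) : EReal) := by
    intro x y
    rw [hdu' x, iInf_image]
    have step : ∀ p : ℝ × H,
        (((-p.1 + f₂ x - inner ℝ p.2 x, -p.2).1 + inner ℝ (-p.1 + f₂ x - inner ℝ p.2 x, -p.2).2 y : ℝ) : EReal)
          = (-((p.1 + inner ℝ p.2 (x + y) : ℝ) : EReal)) + ((f₂ x : ℝ) : EReal) := by
      intro p
      rw [← EReal.coe_neg, ← EReal.coe_add]
      norm_cast
      rw [inner_add_right, inner_neg_left]
      ring
    have congr1 := iInf_congr fun p : ℝ × H => iInf_congr fun _ : p ∈ S₂ => step p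
    rw [congr1,
      ereal_biInf_add S₂ (fun p => -((p.1 + inner ℝ p.2 (x + y) : ℝ) : EReal)) (f₂ x),
      ereal_biInf_neg S₂ (fun p => ((p.1 + inner ℝ p.2 (x + y) : ℝ) : EReal)),
      ← hrep₂ (x + y), ← EReal.coe_neg, ← EReal.coe_add]
    norm_cast
    ring
  refine ⟨?_, ?_, ?_, ?_, ?_⟩
  · intro x Δx
    rw [hsup x Δx, hinf x Δx, ← EReal.coe_add]
    norm_cast
    ring
  · intro x
    have congr1 : (⨆ q ∈ dl x, ((q.1 : ℝ) : EReal))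
        = ⨆ q ∈ dl x, ((q.1 + inner ℝ q.2 (0 : H) : ℝ) : EReal) :=
      iSup_congr fun q => iSup_congr fun _ => by rw [inner_zero_right, add_zero]
    rw [congr1, hsup x 0, add_zero, sub_self]
    rfl
  · intro x
    have congr1 : (⨅ q ∈ du x, ((q.1 : ℝ) : EReal))
        = ⨅ q ∈ du x, ((q.1 + inner ℝ q.2 (0 : H) : ℝ) : EReal) :=
      iInf_congr fun q => iInf_congr fun _ => by rw [inner_zero_right, add_zero]
    rw [congr1, hinf x 0, add_zero, sub_self]
    rfl
  · intro x
    have hpre : dl x = (fun q : ℝ × H => (q.1 + f₁ x - inner ℝ q.2 x, q.2)) ⁻¹' S₁ := by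
      rw [hdl x]; ext q
      simp only [Set.mem_setOf_eq, Set.mem_preimage]
      constructor
      · rintro ⟨p, hp, rfl⟩
        convert hp using 2
        ring
      · intro h
        refine ⟨_, h, ?_⟩
        refine Prod.ext ?_ rfl
        simp only
        ring
    have hcont : Continuous fun q : ℝ × H => (q.1 + f₁ x - inner ℝ q.2 x, q.2) :=
      ((continuous_fst.add continuous_const).sub
        (continuous_snd.inner continuous_const)).prodMk continuous_snd
    refine ⟨hpre ▸ hSclosed₁.preimage hcont, ?_⟩
    rw [hpre]
    intro q1 h1 q2 h2 a b ha hb hab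
    simp only [Set.mem_preimage] at h1 h2 ⊢
    have key : ((a • q1 + b • q2 : ℝ × H).1 + f₁ x - inner ℝ (a • q1 + b • q2 : ℝ × H).2 x,
        (a • q1 + b • q2 : ℝ × H).2)
        = a • ((q1.1 + f₁ x - inner ℝ q1.2 x, q1.2) : ℝ × H)
          + b • ((q2.1 + f₁ x - inner ℝ q2.2 x, q2.2) : ℝ × H) := by
      refine Prod.ext ?_ ?_
      · simp only [Prod.fst_add, Prod.smul_fst, Prod.snd_add, Prod.smul_snd, smul_eq_mul,
          inner_add_left, real_inner_smul_left]
        linear_combination (-(f₁ x)) * hab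
      · simp [Prod.snd_add, Prod.smul_snd]
    rw [key]
    exact hSconv₁ h1 h2 ha hb hab
  · intro x
    have hpre : du x = (fun q : ℝ × H => (-q.1 + f₂ x + inner ℝ q.2 x, -q.2)) ⁻¹' S₂ := by
      rw [hdu x]; ext q
      simp only [Set.mem_setOf_eq, Set.mem_preimage]
      constructor
      · rintro ⟨p, hp, rfl⟩
        convert hp using 2
        · rw [inner_neg_left]; ring
        · simp
      · intro h
        refine ⟨_, h, ?_⟩
        refine Prod.ext ?_ (by simp)
        simp only [inner_neg_left]
        ring
    have hcont : Continuous fun q : ℝ × H => (-q.1 + f₂ x + inner ℝ q.2 x, -q.2) :=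
      ((continuous_fst.neg.add continuous_const).add
        (continuous_snd.inner continuous_const)).prodMk continuous_snd.neg
    refine ⟨hpre ▸ hSclosed₂.preimage hcont, ?_⟩
    rw [hpre]
    intro q1 h1 q2 h2 a b ha hb hab
    simp only [Set.mem_preimage] at h1 h2 ⊢
    have key : (-(a • q1 + b • q2 : ℝ × H).1 + f₂ x + inner ℝ (a • q1 + b • q2 : ℝ × H).2 x,
        -(a • q1 + b • q2 : ℝ × H).2)
        = a • ((-q1.1 + f₂ x + inner ℝ q1.2 x, -q1.2) : ℝ × H)
          + b • ((-q2.1 + f₂ x + inner ℝ q2.2 x, -q2.2) : ℝ × H) := by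
      refine Prod.ext ?_ ?_
      · simp only [Prod.fst_add, Prod.smul_fst, Prod.snd_add, Prod.smul_snd, smul_eq_mul,
          inner_add_left, real_inner_smul_left]
        linear_combination (-(f₂ x)) * hab
      · simp only [Prod.snd_add, Prod.smul_snd, smul_neg]
        abel
    rw [key]
    exact hSconv₂ h1 h2 ha hb hab
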